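/- Let e ≥ 3 and let m_1, …, m_e be positive integers with d = m_1 + … + m_e. Then the rational function Z(s) = (1/(ds+2))·(2 − e + Σ_{i=1}^e 1/(m_i·s+1)) ∈ ℚ(s) has a pole at s = −2/d, i.e. the order of Z at −2/d is negative. (Proposition 1.5, existence of the pole at −n/d for n = 2.) -/

import Mathlib

open Polynomial Finset

/-- The order of a rational function `Z ∈ ℚ(s)` at a point `α ∈ ℚ`: the integer `k`
such that `Z = (s-α)^k · (u/v)` with `u`, `v` not vanishing at `α`. -/
noncomputable def orderAt (Z : RatFunc ℚ) (α : ℚ) : ℤ :=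
  (rootMultiplicity α Z.num : ℤ) - (rootMultiplicity α Z.denom : ℤ)

/-- Proposition 1.5 (existence of the pole at `-n/d` for `n = 2`): for `e ≥ 3` lines with
positive multiplicities `m₁, …, m_e` summing to `d`, the rational function
`Z(s) = (1/(ds+2)) · (2 - e + Σᵢ 1/(mᵢ s + 1))` has a pole at `s = -2/d`. -/

lemma key_pos (e : ℕ) (he : 3 ≤ e) (m : Fin e → ℚ) (hm : ∀ i, 1 ≤ m i)
    (d : ℚ) (hd : d = ∑ i, m i) :
    0 < ∏ i, (d - 2 * m i) + ∑ j, m j * ∏ i ∈ Finset.univ.erase j, (d - 2 * m i) := by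
  set a : Fin e → ℚ := fun i => d - 2 * m i with ha
  have hne : (univ : Finset (Fin e)).Nonempty := by
    refine univ_nonempty_iff.mpr ?_
    exact Fin.pos_iff_nonempty.mp (by omega)
  have hpair : ∀ j k : Fin e, j ≠ k → 2 ≤ a j + a k := by
    intro j k hjk
    have hk' : k ∈ univ.erase j := by simp [Ne.symm hjk]
    have hsplit : d = m j + (m k + ∑ i ∈ (univ.erase j).erase k, m i) := by
      rw [hd, ← Finset.add_sum_erase _ _ (mem_univ j), ← Finset.add_sum_erase _ _ hk']
    have hcard : ((univ.erase j).erase k).card = e - 2 := by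
      rw [Finset.card_erase_of_mem hk', Finset.card_erase_of_mem (mem_univ j)]
      simp; omega
    have hsum : ((e : ℚ) - 2) ≤ ∑ i ∈ (univ.erase j).erase k, m i := by
      have := Finset.card_nsmul_le_sum ((univ.erase j).erase k) m 1 (fun i _ => hm i)
      rw [hcard] at this
      have h2 : ((e - 2 : ℕ) : ℚ) = (e : ℚ) - 2 := by
        have h22 : (2:ℕ) ≤ e := by omega
        push_cast [Nat.cast_sub h22]; ring
      simpa [nsmul_eq_mul, h2] using this
    have he' : (3 : ℚ) ≤ e := by exact_mod_cast he
    simp only [ha]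
    linarith
  by_cases hall : ∀ i, 0 < a i
  · have h1 : 0 < ∏ i, a i := Finset.prod_pos (fun i _ => hall i)
    have h2 : 0 < ∑ j, m j * ∏ i ∈ univ.erase j, a i := by
      refine Finset.sum_pos (fun j _ => ?_) hne
      exact mul_pos (lt_of_lt_of_le one_pos (hm j)) (Finset.prod_pos (fun i _ => hall i))
    linarith
  · push_neg at hall
    obtain ⟨k, hk0⟩ := hall
    have hjbig : ∀ j ∈ univ.erase k, 2 - a k ≤ a j := by
      intro j hj
      have hjk : j ≠ k := (Finset.mem_erase.mp hj).1
      have := hpair j k hjk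
      linarith
    have hjpos : ∀ j ∈ univ.erase k, 0 < a j := fun j hj =>
      lt_of_lt_of_le (by linarith) (hjbig j hj)
    have hP : 0 < ∏ i ∈ univ.erase k, a i := Finset.prod_pos hjpos
    set Pk := ∏ i ∈ univ.erase k, a i with hPk
    have hprodsplit : ∏ i, a i = a k * Pk := (Finset.mul_prod_erase univ a (mem_univ k)).symm
    have hsumsplit : ∑ j, m j * ∏ i ∈ univ.erase j, a i
        = m k * Pk + ∑ j ∈ univ.erase k, m j * (a k * ∏ i ∈ (univ.erase k).erase j, a i) := by
      rw [← Finset.add_sum_erase _ _ (mem_univ k)]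
      congr 1
      refine Finset.sum_congr rfl (fun j hj => ?_)
      have hjk : j ≠ k := (Finset.mem_erase.mp hj).1
      have hkmem : k ∈ univ.erase j := by simp [Ne.symm hjk]
      rw [← Finset.mul_prod_erase _ a hkmem, Finset.erase_right_comm]
    have hc : (0:ℚ) < 2 - a k := by linarith
    -- termwise bound, multiplied through by (2 - a k)
    have hterm : ∀ j ∈ univ.erase k,
        (2 - a k) * (m j * ∏ i ∈ (univ.erase k).erase j, a i) ≤ m j * Pk := by
      intro j hj
      have hj0 : 0 < a j := hjpos j hj
      have hprodj : a j * ∏ i ∈ (univ.erase k).erase j, a i = Pk :=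
        Finset.mul_prod_erase _ a hj
      have hpe : 0 < ∏ i ∈ (univ.erase k).erase j, a i :=
        Finset.prod_pos (fun i hi => hjpos i (Finset.mem_of_mem_erase hi))
      have hmj : 0 < m j := lt_of_lt_of_le one_pos (hm j)
      have hja : 2 - a k ≤ a j := hjbig j hj
      nlinarith [mul_pos hmj hpe]
    have hsumle : (2 - a k) * ∑ j ∈ univ.erase k, m j * ∏ i ∈ (univ.erase k).erase j, a i
        ≤ (d - m k) * Pk := by
      rw [Finset.mul_sum]
      have h1 := Finset.sum_le_sum hterm
      have h2 : ∑ j ∈ univ.erase k, m j * Pk = (d - m k) * Pk := by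
        rw [← Finset.sum_mul]
        have := Finset.add_sum_erase univ m (mem_univ k)
        have hs : ∑ j ∈ univ.erase k, m j = d - m k := by rw [hd]; linarith [this]
        rw [hs]
      linarith
    have hdm : 0 < d - m k := by
      have h1 : ∑ j ∈ univ.erase k, m j = d - m k := by
        have := Finset.add_sum_erase univ m (mem_univ k)
        rw [hd]; linarith [this]
      have hcard : (univ.erase k).card = e - 1 := by
        rw [Finset.card_erase_of_mem (mem_univ k)]; simp
      have h2 : ((e:ℚ) - 1) ≤ ∑ j ∈ univ.erase k, m j := by
        have := Finset.card_nsmul_le_sum (univ.erase k) m 1 (fun i _ => hm i)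
        rw [hcard] at this
        have h3 : ((e - 1 : ℕ) : ℚ) = (e : ℚ) - 1 := by
          have h11 : (1:ℕ) ≤ e := by omega
          push_cast [Nat.cast_sub h11]; ring
        simpa [nsmul_eq_mul, h3] using this
      have he' : (3 : ℚ) ≤ e := by exact_mod_cast he
      linarith
    rw [hprodsplit, hsumsplit]
    have hsummul : ∑ j ∈ univ.erase k, m j * (a k * ∏ i ∈ (univ.erase k).erase j, a i)
        = a k * ∑ j ∈ univ.erase k, m j * ∏ i ∈ (univ.erase k).erase j, a i := by
      rw [Finset.mul_sum]; refine Finset.sum_congr rfl (fun j hj => by ring)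
    rw [hsummul]
    set S := ∑ j ∈ univ.erase k, m j * ∏ i ∈ (univ.erase k).erase j, a i with hS
    -- a k * ((2 - a k) * S) ≥ a k * ((d - m k) * Pk)
    have hb : a k * ((d - m k) * Pk) ≤ a k * ((2 - a k) * S) :=
      mul_le_mul_of_nonpos_left hsumle hk0
    have hak : a k = d - 2 * m k := rfl
    -- (2 - a k) * (a k * Pk + m k * Pk + a k * S) ≥ (2-a k)(a k + m k) Pk + a k (d - m k) Pk
    --   = 2 (d - m k) Pk > 0
    have hgoal : 0 < (2 - a k) * (a k * Pk + (m k * Pk + a k * S)) := by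
      have expand : (2 - a k) * (a k * Pk + (m k * Pk + a k * S))
          = (2 - a k) * ((a k + m k) * Pk) + a k * ((2 - a k) * S) := by ring
      have base : (2 - a k) * ((a k + m k) * Pk) + a k * ((d - m k) * Pk)
          = 2 * ((d - m k) * Pk) := by rw [hak]; ring
      nlinarith [mul_pos hdm hP]
    nlinarith [hgoal, hc]

theorem statement0 (e : ℕ) (he : 3 ≤ e) (m : Fin e → ℕ) (hm : ∀ i, 0 < m i)
    (d : ℕ) (hd : d = ∑ i, m i)
    (Z : RatFunc ℚ)
    (hZ : Z = 1 / ((d : RatFunc ℚ) * RatFunc.X + 2) *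
      ((2 : RatFunc ℚ) - (e : RatFunc ℚ) +
        ∑ i, 1 / ((m i : RatFunc ℚ) * RatFunc.X + 1))) :
    orderAt Z (-2 / (d : ℚ)) < 0 := by
  classical
  have hd3 : 3 ≤ d := by
    rw [hd]
    calc 3 ≤ e := he
    _ = ∑ _i : Fin e, 1 := by simp
    _ ≤ ∑ i, m i := Finset.sum_le_sum (fun i _ => hm i)
  have hdq0 : (0:ℚ) < (d : ℚ) := by exact_mod_cast Nat.lt_of_lt_of_le (by norm_num) hd3
  have hdq : (d : ℚ) ≠ 0 := ne_of_gt hdq0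
  set α : ℚ := -2 / (d : ℚ) with hα
  -- the polynomials
  set Q : ℚ[X] := ((d : ℚ[X]) * X + 2) * ∏ i, ((m i : ℚ[X]) * X + 1) with hQdef
  set P : ℚ[X] := (2 - (e : ℚ[X])) * ∏ i, ((m i : ℚ[X]) * X + 1)
      + ∑ j, ∏ i ∈ Finset.univ.erase j, ((m i : ℚ[X]) * X + 1) with hPdef
  -- evaluations
  set g : Fin e → ℚ := fun i => (m i : ℚ) * α + 1 with hg
  set a : Fin e → ℚ := fun i => (d : ℚ) - 2 * (m i : ℚ) with haf
  have hevg : ∀ i : Fin e, eval α ((m i : ℚ[X]) * X + 1) = g i := by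
    intro i; simp [hg]
  have hdg : ∀ i : Fin e, (d : ℚ) * g i = a i := by
    intro i; simp only [hg, haf, hα]; field_simp; try ring
  have hevalP : eval α P = (2 - (e:ℚ)) * ∏ i, g i + ∑ j, ∏ i ∈ univ.erase j, g i := by
    simp only [hPdef, eval_add, eval_mul, eval_sub, eval_prod, eval_finset_sum,
      eval_natCast, eval_ofNat, hevg]
  have hevalQ : eval α Q = 0 := by
    have h2 : (d:ℚ) * α + 2 = 0 := by rw [hα]; field_simp; try ring
    simp only [hQdef, eval_mul, eval_add, eval_natCast, eval_X, eval_ofNat]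
    rw [h2, zero_mul]
  -- the key identity : d^e * eval α P = 2 * (∏ a + ∑ m_j ∏_{i≠j} a)
  have hprodga : (d:ℚ)^e * ∏ i, g i = ∏ i, a i := by
    calc (d:ℚ)^e * ∏ i, g i = ∏ i : Fin e, ((d:ℚ) * g i) := by
          rw [Finset.prod_mul_distrib, Finset.prod_const, Finset.card_univ, Fintype.card_fin]
      _ = ∏ i, a i := Finset.prod_congr rfl (fun i _ => hdg i)
  have hprodga' : ∀ j : Fin e, (d:ℚ)^(e-1) * ∏ i ∈ univ.erase j, g i
      = ∏ i ∈ univ.erase j, a i := by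
    intro j
    calc (d:ℚ)^(e-1) * ∏ i ∈ univ.erase j, g i = ∏ i ∈ univ.erase j, ((d:ℚ) * g i) := by
          rw [Finset.prod_mul_distrib, Finset.prod_const, Finset.card_erase_of_mem (mem_univ j),
            Finset.card_univ, Fintype.card_fin]
      _ = ∏ i ∈ univ.erase j, a i := Finset.prod_congr rfl (fun i _ => hdg i)
  have hesucc : e = (e - 1) + 1 := by omega
  have hid : (d:ℚ)^e * eval α P
      = 2 * (∏ i, a i + ∑ j, (m j : ℚ) * ∏ i ∈ univ.erase j, a i) := by
    have hsum2 : (d:ℚ) * ∑ j, ∏ i ∈ univ.erase j, a i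
        = (e:ℚ) * ∏ i, a i + 2 * ∑ j, (m j:ℚ) * ∏ i ∈ univ.erase j, a i := by
      rw [Finset.mul_sum]
      have step : ∀ j : Fin e, (d:ℚ) * ∏ i ∈ univ.erase j, a i
          = ∏ i, a i + 2 * ((m j:ℚ) * ∏ i ∈ univ.erase j, a i) := by
        intro j
        have hmp : a j * ∏ i ∈ univ.erase j, a i = ∏ i, a i :=
          Finset.mul_prod_erase univ a (mem_univ j)
        have hdj : (d:ℚ) = a j + 2 * (m j:ℚ) := by simp only [haf]; try ring
        linear_combination (∏ i ∈ univ.erase j, a i) * hdj + hmp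
      rw [Finset.sum_congr rfl (fun j _ => step j), Finset.sum_add_distrib,
        Finset.sum_const, Finset.card_univ, Fintype.card_fin, ← Finset.mul_sum]
      ring
    have hsplit : (d:ℚ)^e * ∑ j, ∏ i ∈ univ.erase j, g i
        = (d:ℚ) * ∑ j, ∏ i ∈ univ.erase j, a i := by
      have hpow : (d:ℚ)^e = (d:ℚ) * (d:ℚ)^(e-1) := by
        conv_lhs => rw [hesucc]
        rw [pow_succ]; ring
      rw [hpow, Finset.mul_sum, Finset.mul_sum]
      refine Finset.sum_congr rfl (fun j _ => ?_)
      rw [← hprodga' j]; ring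
    rw [hevalP, mul_add, ← mul_assoc, mul_comm ((d:ℚ)^e) (2 - (e:ℚ)), mul_assoc,
      hprodga, hsplit, hsum2]
    ring
  -- positivity of the key quantity
  have hkey : 0 < ∏ i, a i + ∑ j, (m j:ℚ) * ∏ i ∈ univ.erase j, a i := by
    have := key_pos e he (fun i => (m i : ℚ)) (fun i => by show (1:ℚ) ≤ (m i:ℚ); exact_mod_cast hm i) (d:ℚ)
      (by rw [hd]; push_cast; ring)
    simpa [haf] using this
  have hPα : eval α P ≠ 0 := by
    intro h0
    rw [h0, mul_zero] at hid
    have : (0:ℚ) < 2 * (∏ i, a i + ∑ j, (m j:ℚ) * ∏ i ∈ univ.erase j, a i) := by linarith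
    rw [← hid] at this
    exact lt_irrefl 0 this
  have hPne : P ≠ 0 := fun h => hPα (by rw [h, eval_zero])
  have hQne : Q ≠ 0 := by
    rw [hQdef]
    refine mul_ne_zero ?_ (Finset.prod_ne_zero_iff.mpr (fun i _ => ?_))
    · intro h
      have := congrArg (eval 0) h
      simp at this
    · intro h
      have := congrArg (eval 0) h
      simp at this
  -- Z * algebraMap Q = algebraMap P
  set A := algebraMap ℚ[X] (RatFunc ℚ) with hA
  have hAn : ∀ n : ℕ, A (n : ℚ[X]) = (n : RatFunc ℚ) := fun n => map_natCast A n
  have hu : A ((d : ℚ[X]) * X + 2) = (d : RatFunc ℚ) * RatFunc.X + 2 := by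
    rw [map_add, map_mul, hAn, RatFunc.algebraMap_X, map_ofNat]
  have hv : ∀ i : Fin e, A ((m i : ℚ[X]) * X + 1)
      = (m i : RatFunc ℚ) * RatFunc.X + 1 := by
    intro i
    rw [map_add, map_mul, hAn, RatFunc.algebraMap_X, map_one]
  have hvne : ∀ i : Fin e, ((m i : RatFunc ℚ) * RatFunc.X + 1) ≠ 0 := by
    intro i
    rw [← hv i]
    refine RatFunc.algebraMap_ne_zero ?_
    intro h
    have := congrArg (eval 0) h
    simp at this
  have hune : ((d : RatFunc ℚ) * RatFunc.X + 2) ≠ 0 := by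
    rw [← hu]
    refine RatFunc.algebraMap_ne_zero ?_
    intro h
    have := congrArg (eval 0) h
    simp at this
  have hZQ : Z * A Q = A P := by
    rw [hZ, hQdef, hPdef]
    have hAX : A X = RatFunc.X := RatFunc.algebraMap_X
    simp only [map_mul, map_add, map_sub, map_prod, map_sum, map_one, map_ofNat, hAn, hAX]
    set Pi := ∏ i : Fin e, ((m i : RatFunc ℚ) * RatFunc.X + 1) with hPi
    set u := (d : RatFunc ℚ) * RatFunc.X + 2 with hu2
    rw [one_div]
    have h1 : u⁻¹ * ((2 : RatFunc ℚ) - (e : RatFunc ℚ)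
        + ∑ i, ((m i : RatFunc ℚ) * RatFunc.X + 1)⁻¹) * (u * Pi)
        = ((2 : RatFunc ℚ) - (e : RatFunc ℚ)
        + ∑ i, ((m i : RatFunc ℚ) * RatFunc.X + 1)⁻¹) * Pi := by
      rw [mul_comm u⁻¹ _, mul_assoc, ← mul_assoc u⁻¹ u Pi, inv_mul_cancel₀ hune, one_mul]
    simp only [one_div] at h1 ⊢
    rw [h1, add_mul, Finset.sum_mul]
    congr 1
    refine Finset.sum_congr rfl (fun j _ => ?_)
    have hmp : ((m j : RatFunc ℚ) * RatFunc.X + 1)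
        * ∏ i ∈ univ.erase j, ((m i : RatFunc ℚ) * RatFunc.X + 1)
        = ∏ i : Fin e, ((m i : RatFunc ℚ) * RatFunc.X + 1) :=
      Finset.mul_prod_erase univ (fun i => ((m i : RatFunc ℚ) * RatFunc.X + 1)) (mem_univ j)
    rw [← hPi] at hmp
    rw [← hmp, inv_mul_cancel_left₀ (hvne j)]
  -- from hZQ : num/denom relation
  have hAQne : A Q ≠ 0 := RatFunc.algebraMap_ne_zero hQne
  have hAPne : A P ≠ 0 := RatFunc.algebraMap_ne_zero hPne
  have hZne : Z ≠ 0 := by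
    intro h
    rw [h, zero_mul] at hZQ
    exact hAPne hZQ.symm
  have hnumden : Z.num * Q = Z.denom * P := by
    apply RatFunc.algebraMap_injective ℚ
    have hden : A Z.denom ≠ 0 := RatFunc.algebraMap_ne_zero (RatFunc.denom_ne_zero Z)
    have hnd : A Z.num = Z * A Z.denom :=
      (div_eq_iff hden).mp (RatFunc.num_div_denom Z)
    calc A (Z.num * Q) = A Z.num * A Q := map_mul A _ _
      _ = (Z * A Z.denom) * A Q := by rw [hnd]
      _ = (Z * A Q) * A Z.denom := by ring
      _ = A P * A Z.denom := by rw [hZQ]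
      _ = A Z.denom * A P := by ring
      _ = A (Z.denom * P) := (map_mul A _ _).symm
  -- root multiplicities
  have hnum0 : Z.num ≠ 0 := RatFunc.num_ne_zero hZne
  have hden0 : Z.denom ≠ 0 := RatFunc.denom_ne_zero Z
  have hrm : rootMultiplicity α Z.num + rootMultiplicity α Q
      = rootMultiplicity α Z.denom + rootMultiplicity α P := by
    rw [← Polynomial.rootMultiplicity_mul (mul_ne_zero hnum0 hQne),
      ← Polynomial.rootMultiplicity_mul (mul_ne_zero hden0 hPne), hnumden]
  have hrmP : rootMultiplicity α P = 0 :=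
    Polynomial.rootMultiplicity_eq_zero hPα
  have hrmQ : 0 < rootMultiplicity α Q :=
    (Polynomial.rootMultiplicity_pos hQne).mpr hevalQ
  rw [hrmP] at hrm
  unfold orderAt
  omega
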